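/- Let A = ∑_{n≥1} g_n * (27/256)^n. Then n^(5/2) * (27/256)^n * (∑_{k=0}^{n} g_k * g_{n-k}) tends to 2 * A * (16/27) * sqrt(3/(2π)) as n → ∞. -/

import Mathlib

open Filter Topology

/-- `gseq n` is the number `g_n = 2·(4n+1)!/((n+1)!·(3n+2)!)` of rooted 3-connected
planar triangulations with `2n+2` faces (as a real number), with `g_0 = 0`. -/
noncomputable def gseq (n : ℕ) : ℝ :=
  if n = 0 then 0
  else 2 * (Nat.factorial (4 * n + 1)) / ((Nat.factorial (n + 1)) * (Nat.factorial (3 * n + 2)))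


open Stirling

noncomputable def aseq (n : ℕ) : ℝ := gseq n * (27 / 256 : ℝ) ^ n

lemma gseq_nonneg (n : ℕ) : 0 ≤ gseq n := by
  unfold gseq; split
  · exact le_refl _
  · positivity

lemma aseq_nonneg (n : ℕ) : 0 ≤ aseq n :=
  mul_nonneg (gseq_nonneg n) (by positivity)

lemma stirlingSeq_pos {n : ℕ} (hn : n ≠ 0) : 0 < stirlingSeq n := by
  obtain ⟨m, rfl⟩ := Nat.exists_eq_succ_of_ne_zero hn
  exact stirlingSeq'_pos m

lemma factorial_eq (n : ℕ) (hn : n ≠ 0) :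
    ((Nat.factorial n : ℕ) : ℝ) =
      stirlingSeq n * (Real.sqrt (2 * n) * ((n : ℝ) / Real.exp 1) ^ n) := by
  have h : (Real.sqrt (2 * n) * ((n : ℝ) / Real.exp 1) ^ n) ≠ 0 := by
    have : (0:ℝ) < n := by exact_mod_cast Nat.pos_of_ne_zero hn
    positivity
  rw [stirlingSeq, div_mul_cancel₀ _ h]

lemma gseq_eq (n : ℕ) (hn : n ≠ 0) :
    gseq n = 2 * (4 * (n:ℝ) + 1) / (((n:ℝ) + 1) * (3 * n + 1) * (3 * n + 2)) *
      ((Nat.factorial (4 * n) : ℝ) / ((Nat.factorial n : ℝ) * (Nat.factorial (3 * n) : ℝ))) := by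
  have h1 : Nat.factorial (4 * n + 1) = (4 * n + 1) * Nat.factorial (4 * n) := Nat.factorial_succ _
  have h2 : Nat.factorial (n + 1) = (n + 1) * Nat.factorial n := Nat.factorial_succ _
  have h3 : Nat.factorial (3 * n + 2) = (3 * n + 2) * ((3 * n + 1) * Nat.factorial (3 * n)) := by
    rw [Nat.factorial_succ, Nat.factorial_succ]
  rw [gseq, if_neg hn, h1, h2, h3]
  have hf1 : ((Nat.factorial n : ℕ) : ℝ) ≠ 0 := by positivity
  have hf3 : ((Nat.factorial (3 * n) : ℕ) : ℝ) ≠ 0 := by positivity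
  have hn1 : ((n:ℝ) + 1) ≠ 0 := by positivity
  have h31 : (3 * (n:ℝ) + 1) ≠ 0 := by positivity
  have h32 : (3 * (n:ℝ) + 2) ≠ 0 := by positivity
  push_cast
  field_simp

lemma pow_ratio (n : ℕ) (hn : n ≠ 0) :
    ((4 * (n:ℝ)) / Real.exp 1) ^ (4*n) /
      (((n:ℝ) / Real.exp 1) ^ n * ((3 * (n:ℝ)) / Real.exp 1) ^ (3*n)) = (256 / 27 : ℝ) ^ n := by
  have he : Real.exp 1 ≠ 0 := Real.exp_ne_zero 1
  have hn' : ((n:ℝ)) ≠ 0 := by exact_mod_cast hn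
  rw [pow_mul, pow_mul, ← mul_pow, ← div_pow]
  congr 1
  field_simp
  ring_nf

lemma sqrt_ratio (n : ℕ) (hn : n ≠ 0) :
    Real.sqrt (2 * (4*n : ℕ)) =
      Real.sqrt (2 / (3 * n)) * (Real.sqrt (2 * n) * Real.sqrt (2 * (3*n : ℕ))) := by
  have hn' : (0:ℝ) < (n:ℝ) := by exact_mod_cast Nat.pos_of_ne_zero hn
  rw [← Real.sqrt_mul (by positivity), ← Real.sqrt_mul (by positivity)]
  congr 1
  push_cast
  field_simp
  ring

lemma ratio_eq (n : ℕ) (hn : n ≠ 0) :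
    ((Nat.factorial (4 * n) : ℕ) : ℝ) / ((Nat.factorial n : ℝ) * (Nat.factorial (3 * n) : ℝ)) =
      stirlingSeq (4 * n) / (stirlingSeq n * stirlingSeq (3 * n)) *
        Real.sqrt (2 / (3 * n)) * (256 / 27 : ℝ) ^ n := by
  have hn' : (0:ℝ) < (n:ℝ) := by exact_mod_cast Nat.pos_of_ne_zero hn
  have h4 : (4 * n) ≠ 0 := by omega
  have h3 : (3 * n) ≠ 0 := by omega
  rw [factorial_eq n hn, factorial_eq _ h4, factorial_eq _ h3]
  have c4 : ((4 * n : ℕ) : ℝ) = 4 * (n:ℝ) := by push_cast; ring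
  have c3 : ((3 * n : ℕ) : ℝ) = 3 * (n:ℝ) := by push_cast; ring
  rw [← pow_ratio n hn, ← c4, ← c3]
  rw [sqrt_ratio n hn]
  have s1 : stirlingSeq n ≠ 0 := (stirlingSeq_pos hn).ne'
  have s3 : stirlingSeq (3 * n) ≠ 0 := (stirlingSeq_pos h3).ne'
  have e1 : (((n:ℝ)) / Real.exp 1) ^ n ≠ 0 := by positivity
  have e3 : (((3*n:ℕ):ℝ) / Real.exp 1) ^ (3*n) ≠ 0 := by
    rw [c3]; positivity
  have q1 : Real.sqrt (2 * n) ≠ 0 := by positivity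
  have q3 : Real.sqrt (2 * (3*n:ℕ)) ≠ 0 := by
    rw [c3]; positivity
  field_simp
  push_cast
  ring_nf

/-- exact form of `n^{5/2} aₙ` for `n ≥ 1`. -/
lemma aseq_formula (n : ℕ) (hn : n ≠ 0) :
    (n:ℝ) ^ ((5:ℝ)/2) * aseq n =
      2 * (4 * (n:ℝ) + 1) * (n:ℝ)^2 / (((n:ℝ) + 1) * (3 * n + 1) * (3 * n + 2)) *
        (stirlingSeq (4 * n) / (stirlingSeq n * stirlingSeq (3 * n))) * Real.sqrt (2/3) := by
  have hn' : (0:ℝ) < (n:ℝ) := by exact_mod_cast Nat.pos_of_ne_zero hn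
  have hpow : ((256:ℝ)/27) ^ n * ((27:ℝ)/256) ^ n = 1 := by
    rw [← mul_pow]; norm_num
  have h52 : ((n:ℝ)) ^ ((5:ℝ)/2) = (n:ℝ)^2 * Real.sqrt n := by
    rw [show ((5:ℝ)/2) = ((2:ℕ):ℝ) + (1/2 : ℝ) by norm_num, Real.rpow_add hn',
      Real.rpow_natCast, ← Real.sqrt_eq_rpow]
  have hsq : Real.sqrt n * Real.sqrt (2 / (3 * n)) = Real.sqrt (2/3) := by
    rw [← Real.sqrt_mul (by positivity)]
    congr 1
    field_simp
  rw [aseq, gseq_eq n hn, ratio_eq n hn, h52]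
  calc ((n:ℝ)^2 * Real.sqrt n) *
      (2 * (4 * (n:ℝ) + 1) / (((n:ℝ) + 1) * (3 * n + 1) * (3 * n + 2)) *
        (stirlingSeq (4 * n) / (stirlingSeq n * stirlingSeq (3 * n)) *
          Real.sqrt (2 / (3 * n)) * (256 / 27 : ℝ) ^ n) * (27 / 256 : ℝ) ^ n)
      = 2 * (4 * (n:ℝ) + 1) * (n:ℝ)^2 / (((n:ℝ) + 1) * (3 * n + 1) * (3 * n + 2)) *
        (stirlingSeq (4 * n) / (stirlingSeq n * stirlingSeq (3 * n))) *
        (Real.sqrt n * Real.sqrt (2 / (3 * n))) * (((256:ℝ)/27) ^ n * ((27:ℝ)/256) ^ n) := by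
        ring
    _ = _ := by rw [hsq, hpow]; ring

lemma tendsto_Q :
    Tendsto (fun n : ℕ => 2 * (4 * (n:ℝ) + 1) * (n:ℝ)^2 /
      (((n:ℝ) + 1) * (3 * n + 1) * (3 * n + 2))) atTop (𝓝 (8/9)) := by
  have h0 : Tendsto (fun n : ℕ => 1 / (n:ℝ)) atTop (𝓝 0) :=
    tendsto_one_div_atTop_nhds_zero_nat
  have hnum : Tendsto (fun n : ℕ => 2 * (4 + 1 / (n:ℝ))) atTop (𝓝 8) := by
    have := (tendsto_const_nhds (x := (4:ℝ)) (f := atTop (α := ℕ))).add h0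
    have h2 := this.const_mul (2:ℝ)
    norm_num at h2
    simpa using h2
  have hden : Tendsto (fun n : ℕ => (1 + 1/(n:ℝ)) * (3 + 1/(n:ℝ)) * (3 + 2/(n:ℝ)))
      atTop (𝓝 9) := by
    have h2 : Tendsto (fun n : ℕ => 2 / (n:ℝ)) atTop (𝓝 0) := by
      simpa [div_eq_mul_inv] using h0.const_mul 2
    have := (((tendsto_const_nhds (x := (1:ℝ)) (f := atTop (α := ℕ))).add h0).mul
      ((tendsto_const_nhds (x := (3:ℝ)) (f := atTop (α := ℕ))).add h0)).mul
      ((tendsto_const_nhds (x := (3:ℝ)) (f := atTop (α := ℕ))).add h2)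
    norm_num at this
    convert this using 2 <;> norm_num <;> ring
  have key := hnum.div hden (by norm_num)
  have : (8:ℝ)/9 = 8 / 9 := rfl
  refine Tendsto.congr' ?_ (by simpa using key)
  filter_upwards [eventually_ge_atTop 1] with n hn
  have hn' : (0:ℝ) < (n:ℝ) := by exact_mod_cast hn
  simp only [Pi.div_apply]
  field_simp

lemma tendsto_R :
    Tendsto (fun n : ℕ => stirlingSeq (4 * n) / (stirlingSeq n * stirlingSeq (3 * n)))
      atTop (𝓝 (Real.sqrt Real.pi / (Real.sqrt Real.pi * Real.sqrt Real.pi))) := by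
  have hπ : Real.sqrt Real.pi ≠ 0 := by
    positivity
  have h4 : Tendsto (fun n : ℕ => 4 * n) atTop atTop :=
    tendsto_atTop_mono (fun n => by simp; omega) tendsto_id
  have h3 : Tendsto (fun n : ℕ => 3 * n) atTop atTop :=
    tendsto_atTop_mono (fun n => by simp; omega) tendsto_id
  exact (tendsto_stirlingSeq_sqrt_pi.comp h4).div
    (tendsto_stirlingSeq_sqrt_pi.mul (tendsto_stirlingSeq_sqrt_pi.comp h3))
    (by positivity)

lemma tendsto_main :
    Tendsto (fun n : ℕ => (n:ℝ) ^ ((5:ℝ)/2) * aseq n) atTop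
      (𝓝 ((16:ℝ)/27 * Real.sqrt (3 / (2 * Real.pi)))) := by
  have hconst : (16:ℝ)/27 * Real.sqrt (3 / (2 * Real.pi)) =
      8/9 * (Real.sqrt Real.pi / (Real.sqrt Real.pi * Real.sqrt Real.pi)) * Real.sqrt (2/3) := by
    have hπ : (0:ℝ) < Real.pi := Real.pi_pos
    have hs : Real.sqrt Real.pi ≠ 0 := by positivity
    have h1 : (8:ℝ)/9 * (Real.sqrt Real.pi / (Real.sqrt Real.pi * Real.sqrt Real.pi)) *
        Real.sqrt (2/3) = 8/9 * (Real.sqrt (2/3) / Real.sqrt Real.pi) := by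
      field_simp
    rw [h1, ← Real.sqrt_div (by norm_num)]
    rw [show (2:ℝ)/3/Real.pi = (4/9) * (3/(2*Real.pi)) by field_simp; ring]
    rw [Real.sqrt_mul (by norm_num), show Real.sqrt ((4:ℝ)/9) = 2/3 by
      rw [show (4:ℝ)/9 = (2/3)^2 by norm_num, Real.sqrt_sq (by norm_num)]]
    ring
  rw [hconst]
  have := (tendsto_Q.mul tendsto_R).mul (tendsto_const_nhds (x := Real.sqrt (2/3)))
  refine Tendsto.congr' ?_ this
  filter_upwards [eventually_ge_atTop 1] with n hn
  exact (aseq_formula n (by omega)).symm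

noncomputable def Cval : ℝ := (16:ℝ)/27 * Real.sqrt (3 / (2 * Real.pi))

lemma tendsto_main' : Tendsto (fun n : ℕ => (n:ℝ) ^ ((5:ℝ)/2) * aseq n) atTop (𝓝 Cval) :=
  tendsto_main

lemma exists_bound : ∃ B : ℝ, 0 ≤ B ∧ ∀ n : ℕ, (n:ℝ) ^ ((5:ℝ)/2) * aseq n ≤ B := by
  obtain ⟨B, hB⟩ := tendsto_main'.bddAbove_range
  rw [mem_upperBounds] at hB
  have hB' : ∀ n : ℕ, (n:ℝ) ^ ((5:ℝ)/2) * aseq n ≤ B := fun n => hB _ ⟨n, rfl⟩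
  refine ⟨B, ?_, hB'⟩
  have h0 := hB' 0
  simpa [Real.zero_rpow (by norm_num : ((5:ℝ)/2) ≠ 0)] using h0

lemma summable_aseq : Summable aseq := by
  obtain ⟨B, hB0, hB⟩ := exists_bound
  have hsum : Summable (fun n : ℕ => B * ((n:ℝ) ^ ((5:ℝ)/2))⁻¹) :=
    (Real.summable_nat_rpow_inv.mpr (by norm_num : (1:ℝ) < 5/2)).mul_left B
  refine Summable.of_nonneg_of_le aseq_nonneg (fun n => ?_) hsum
  rcases eq_or_ne n 0 with rfl | hn
  · simp [aseq, gseq]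
  · have hn' : (0:ℝ) < (n:ℝ) := by exact_mod_cast Nat.pos_of_ne_zero hn
    have hp : (0:ℝ) < (n:ℝ) ^ ((5:ℝ)/2) := by positivity
    calc aseq n = ((n:ℝ) ^ ((5:ℝ)/2) * aseq n) / ((n:ℝ) ^ ((5:ℝ)/2)) := by
          field_simp
      _ ≤ B / ((n:ℝ) ^ ((5:ℝ)/2)) := (div_le_div_iff_of_pos_right hp).mpr (hB n)
      _ = B * ((n:ℝ) ^ ((5:ℝ)/2))⁻¹ := by ring

lemma shift_tendsto (k : ℕ) :
    Tendsto (fun n : ℕ => (n:ℝ) ^ ((5:ℝ)/2) * aseq (n - k)) atTop (𝓝 Cval) := by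
  have hφ : Tendsto (fun m : ℕ => (((m + k : ℕ)):ℝ) ^ ((5:ℝ)/2) * aseq m) atTop (𝓝 Cval) := by
    have h1 : Tendsto (fun m : ℕ => (((m + k : ℕ)):ℝ) / (m:ℝ)) atTop (𝓝 1) := by
      have h2 : Tendsto (fun m : ℕ => 1 + (k:ℝ) * (1 / (m:ℝ))) atTop (𝓝 1) := by
        have h4 := tendsto_one_div_atTop_nhds_zero_nat.const_mul (k:ℝ)
        have h3 := (tendsto_const_nhds (x := (1:ℝ)) (f := atTop (α := ℕ))).add h4
        simpa using h3
      refine h2.congr' ?_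
      filter_upwards [eventually_ge_atTop 1] with m hm
      have hm' : (0:ℝ) < (m:ℝ) := by exact_mod_cast hm
      push_cast
      field_simp
    have hcont : Tendsto (fun x : ℝ => x ^ ((5:ℝ)/2)) (𝓝 1) (𝓝 1) := by
      have h5 := (Real.continuousAt_rpow_const 1 ((5:ℝ)/2) (Or.inl one_ne_zero)).tendsto
      simpa [Real.one_rpow] using h5
    have hr := hcont.comp h1
    have hprod := hr.mul tendsto_main'
    rw [one_mul] at hprod
    refine Tendsto.congr' ?_ hprod
    filter_upwards [eventually_ge_atTop 1] with m hm
    have hm' : (0:ℝ) < (m:ℝ) := by exact_mod_cast hm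
    have key : ((((m + k : ℕ)):ℝ) / (m:ℝ)) ^ ((5:ℝ)/2) * ((m:ℝ) ^ ((5:ℝ)/2))
        = (((m + k : ℕ)):ℝ) ^ ((5:ℝ)/2) := by
      rw [← Real.mul_rpow (by positivity) hm'.le, div_mul_cancel₀ _ hm'.ne']
    show (fun x : ℝ => x ^ ((5:ℝ)/2)) ((((m + k : ℕ)):ℝ) / (m:ℝ)) * ((m:ℝ) ^ ((5:ℝ)/2) * aseq m)
        = (((m + k : ℕ)):ℝ) ^ ((5:ℝ)/2) * aseq m
    rw [← key]
    ring
  have hcomp := hφ.comp (tendsto_sub_atTop_nat k)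
  refine Tendsto.congr' ?_ hcomp
  filter_upwards [eventually_ge_atTop k] with n hn
  have : n - k + k = n := by omega
  simp only [Function.comp_apply, this]

noncomputable def Fc (c n k : ℕ) : ℝ :=
  if 2 * k + c ≤ n then aseq k * ((n:ℝ) ^ ((5:ℝ)/2) * aseq (n - k)) else 0

lemma Fc_nonneg (c n k : ℕ) : 0 ≤ Fc c n k := by
  rw [Fc]
  split
  · exact mul_nonneg (aseq_nonneg k)
      (mul_nonneg (Real.rpow_nonneg (by positivity) _) (aseq_nonneg _))
  · exact le_refl _

lemma conv_half (c : ℕ) (A : ℝ) (hA : A = ∑' n : ℕ, aseq n) :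
    Tendsto (fun n : ℕ => ∑' k : ℕ, Fc c n k) atTop (𝓝 (A * Cval)) := by
  obtain ⟨B, hB0, hB⟩ := exists_bound
  have hval : A * Cval = ∑' k : ℕ, aseq k * Cval := by
    rw [tsum_mul_right, hA]
  rw [hval]
  refine tendsto_tsum_of_dominated_convergence
    (bound := fun k : ℕ => aseq k * ((2:ℝ) ^ ((5:ℝ)/2) * B)) ?_ ?_ ?_
  · exact summable_aseq.mul_right _
  · intro k
    have hlim := (shift_tendsto k).const_mul (aseq k)
    refine Tendsto.congr' ?_ hlim
    filter_upwards [eventually_ge_atTop (2 * k + c)] with n hn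
    rw [Fc, if_pos hn]
  · refine Eventually.of_forall fun n => fun k => ?_
    rw [Real.norm_eq_abs, abs_of_nonneg (Fc_nonneg c n k), Fc]
    split
    · next h =>
      have hle : n ≤ 2 * (n - k) := by omega
      have h1 : (n:ℝ) ^ ((5:ℝ)/2) ≤ (((2 * (n - k) : ℕ)):ℝ) ^ ((5:ℝ)/2) :=
        Real.rpow_le_rpow (by positivity) (by exact_mod_cast hle) (by norm_num)
      have h2 : (((2 * (n - k) : ℕ)):ℝ) ^ ((5:ℝ)/2)
          = (2:ℝ) ^ ((5:ℝ)/2) * (((n - k : ℕ)):ℝ) ^ ((5:ℝ)/2) := by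
        push_cast
        rw [Real.mul_rpow (by norm_num) (by positivity)]
      have h3 : (n:ℝ) ^ ((5:ℝ)/2) * aseq (n - k) ≤ (2:ℝ) ^ ((5:ℝ)/2) * B := by
        calc (n:ℝ) ^ ((5:ℝ)/2) * aseq (n - k)
            ≤ ((2:ℝ) ^ ((5:ℝ)/2) * (((n - k : ℕ)):ℝ) ^ ((5:ℝ)/2)) * aseq (n - k) := by
              refine mul_le_mul_of_nonneg_right ?_ (aseq_nonneg _)
              rw [← h2]; exact h1
          _ = (2:ℝ) ^ ((5:ℝ)/2) * ((((n - k : ℕ)):ℝ) ^ ((5:ℝ)/2) * aseq (n - k)) := by ring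
          _ ≤ (2:ℝ) ^ ((5:ℝ)/2) * B := by
              refine mul_le_mul_of_nonneg_left (hB _) (by positivity)
      exact mul_le_mul_of_nonneg_left h3 (aseq_nonneg k)
    · exact mul_nonneg (aseq_nonneg k) (by positivity)

lemma sum_split (n : ℕ) :
    (n:ℝ) ^ ((5:ℝ)/2) * (27/256 : ℝ) ^ n * ∑ k ∈ Finset.range (n+1), gseq k * gseq (n-k) =
      (∑' k : ℕ, Fc 0 n k) + (∑' k : ℕ, Fc 1 n k) := by
  have hstep1 : (n:ℝ) ^ ((5:ℝ)/2) * (27/256 : ℝ) ^ n *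
      ∑ k ∈ Finset.range (n+1), gseq k * gseq (n-k)
      = ∑ k ∈ Finset.range (n+1), aseq k * ((n:ℝ) ^ ((5:ℝ)/2) * aseq (n-k)) := by
    rw [Finset.mul_sum]
    refine Finset.sum_congr rfl fun k hk => ?_
    have hkn : k ≤ n := by
      have := Finset.mem_range.mp hk; omega
    have hp : (27/256:ℝ)^k * (27/256:ℝ)^(n-k) = (27/256:ℝ)^n := by
      rw [← pow_add]; congr 1; omega
    simp only [aseq]
    calc (n:ℝ) ^ ((5:ℝ)/2) * (27/256:ℝ)^n * (gseq k * gseq (n-k))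
        = (gseq k * gseq (n-k)) * (n:ℝ) ^ ((5:ℝ)/2) * ((27/256:ℝ)^k * (27/256:ℝ)^(n-k)) := by
          rw [hp]; ring
      _ = _ := by ring
  have htsum0 : (∑' k : ℕ, Fc 0 n k) = ∑ k ∈ Finset.range (n+1), Fc 0 n k := by
    refine tsum_eq_sum fun k hk => ?_
    have hk' : n < k := by simpa using hk
    rw [Fc, if_neg (by omega)]
  have htsum1 : (∑' k : ℕ, Fc 1 n k) = ∑ k ∈ Finset.range (n+1), Fc 1 n k := by
    refine tsum_eq_sum fun k hk => ?_
    have hk' : n < k := by simpa using hk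
    rw [Fc, if_neg (by omega)]
  rw [htsum0, htsum1, hstep1]
  have hsplit : ∀ k ∈ Finset.range (n+1),
      aseq k * ((n:ℝ) ^ ((5:ℝ)/2) * aseq (n-k)) = Fc 0 n k +
        (if n < 2 * k then aseq k * ((n:ℝ) ^ ((5:ℝ)/2) * aseq (n-k)) else 0) := by
    intro k _
    rw [Fc]
    by_cases h : 2 * k ≤ n
    · rw [if_pos (by omega), if_neg (by omega), add_zero]
    · rw [if_neg (by omega), if_pos (by omega), zero_add]
  rw [Finset.sum_congr rfl hsplit, Finset.sum_add_distrib]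
  congr 1
  rw [← Finset.sum_range_reflect
    (fun k => if n < 2 * k then aseq k * ((n:ℝ) ^ ((5:ℝ)/2) * aseq (n-k)) else 0) (n+1)]
  refine Finset.sum_congr rfl fun j hj => ?_
  have hj' : j ≤ n := by
    have := Finset.mem_range.mp hj; omega
  have hredux : n + 1 - 1 - j = n - j := by omega
  rw [hredux, Fc]
  by_cases h : 2 * j + 1 ≤ n
  · rw [if_pos (by omega), if_pos h, show n - (n - j) = j from by omega]
    ring
  · rw [if_neg (by omega), if_neg h]

/-- With `A = ∑_{n≥1} g_n (27/256)ⁿ`, one has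
`n^(5/2)·(27/256)ⁿ·(∑_{k=0}^n g_k g_{n-k}) → 2·A·(16/27)·√(3/(2π))`. -/
theorem stmt_6 (A : ℝ) (hA : A = ∑' n : ℕ, gseq n * (27 / 256 : ℝ) ^ n) :
    Tendsto
      (fun n : ℕ =>
        (n : ℝ) ^ ((5 : ℝ) / 2) * (27 / 256 : ℝ) ^ n *
          ∑ k ∈ Finset.range (n + 1), gseq k * gseq (n - k))
      atTop (𝓝 (2 * A * (16 / 27) * Real.sqrt (3 / (2 * Real.pi)))) := by
  have hA' : A = ∑' n : ℕ, aseq n := by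
    rw [hA]; simp only [aseq]
  have h0 := conv_half 0 A hA'
  have h1 := conv_half 1 A hA'
  have hsum := h0.add h1
  have hval : 2 * A * (16 / 27) * Real.sqrt (3 / (2 * Real.pi)) = A * Cval + A * Cval := by
    rw [Cval]; ring
  rw [hval]
  exact hsum.congr fun n => (sum_split n).symm
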